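/- arXiv:1910.03174 — 7 statements merged into one kernel-verified Lean document; each statement's English description precedes it below -/
import Mathlib

section
/- The function z ↦ ς(z)/z is strictly increasing on (0,∞) and tends to 1 as z → ∞, where ς(z) = √(1+z²) + ln(z/(1+√(1+z²))). -/
open Real Filter

noncomputable def varsigma (z : ℝ) : ℝ :=
  Real.sqrt (1 + z ^ 2) + Real.log (z / (1 + Real.sqrt (1 + z ^ 2)))

lemma sqrt_pos' (z : ℝ) : 0 < Real.sqrt (1 + z ^ 2) :=
  Real.sqrt_pos.2 (by positivity)

lemma sqrt_aux {z : ℝ} (hz : 0 < z) :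
    Real.sqrt (z⁻¹ ^ 2 + 1) = Real.sqrt (1 + z ^ 2) / z := by
  rw [show z⁻¹ ^ 2 + 1 = (1 + z ^ 2) / z ^ 2 by field_simp,
    Real.sqrt_div (by positivity), Real.sqrt_sq hz.le]

lemma varsigma_hasDerivAt {x : ℝ} (hx : 0 < x) :
    HasDerivAt varsigma (Real.sqrt (1 + x ^ 2) / x) x := by
  set s := Real.sqrt (1 + x ^ 2) with hs
  have hs2 : s ^ 2 = 1 + x ^ 2 := Real.sq_sqrt (by positivity)
  have hs0 : 0 < s := sqrt_pos' x
  have h1 : HasDerivAt (fun z : ℝ => 1 + z ^ 2) (2 * x) x := by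
    simpa using (hasDerivAt_pow 2 x).const_add 1
  have hsd : HasDerivAt (fun z => Real.sqrt (1 + z ^ 2)) (x / s) x := by
    have := h1.sqrt (by positivity)
    convert this using 1
    rw [← hs]; field_simp
  have hlog1 : HasDerivAt (fun z : ℝ => Real.log z) (1 / x) x := by
    simpa using Real.hasDerivAt_log hx.ne'
  have hlog2 : HasDerivAt (fun z => Real.log (1 + Real.sqrt (1 + z ^ 2)))
      ((x / s) / (1 + s)) x := by
    have hne : (1 : ℝ) + s ≠ 0 := by positivity
    exact (hsd.const_add 1).log hne
  have hg : HasDerivAt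
      (fun z => Real.sqrt (1 + z ^ 2) + (Real.log z - Real.log (1 + Real.sqrt (1 + z ^ 2))))
      (x / s + (1 / x - (x / s) / (1 + s))) x := hsd.add (hlog1.sub hlog2)
  have heq : (fun z => Real.sqrt (1 + z ^ 2) + (Real.log z - Real.log (1 + Real.sqrt (1 + z ^ 2))))
      =ᶠ[nhds x] varsigma := by
    filter_upwards [Ioi_mem_nhds hx] with z hz
    have hz0 : (0:ℝ) < z := hz
    have : (0:ℝ) < 1 + Real.sqrt (1 + z ^ 2) := by positivity
    rw [varsigma, Real.log_div hz0.ne' this.ne']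
  have hval : x / s + (1 / x - (x / s) / (1 + s)) = s / x := by
    have h1s : (1:ℝ) + s ≠ 0 := by positivity
    field_simp
    linear_combination (-s) * hs2
  rw [← hval]
  exact hg.congr_of_eventuallyEq heq.symm

lemma f_hasDerivAt {x : ℝ} (hx : 0 < x) :
    HasDerivAt (fun z => varsigma z / z)
      ((Real.sqrt (1 + x ^ 2) - varsigma x) / x ^ 2) x := by
  have := (varsigma_hasDerivAt hx).div (hasDerivAt_id x) hx.ne'
  convert this using 1
  · rfl
  · rfl
  · rfl
  · simp only [id, mul_one]
    rw [div_mul_cancel₀ _ hx.ne']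

lemma varsigma_lt {x : ℝ} (hx : 0 < x) : varsigma x < Real.sqrt (1 + x ^ 2) := by
  have hs0 : 0 < Real.sqrt (1 + x ^ 2) := sqrt_pos' x
  have hlt : x / (1 + Real.sqrt (1 + x ^ 2)) < 1 := by
    rw [div_lt_one (by positivity)]
    have : x ≤ Real.sqrt (1 + x ^ 2) := by
      nlinarith [Real.sq_sqrt (show (0:ℝ) ≤ 1 + x ^ 2 by positivity),
        Real.sqrt_nonneg (1 + x ^ 2)]
    linarith
  have := Real.log_neg (by positivity) hlt
  unfold varsigma; linarith

theorem varsigma_div_strictMono_tendsto_one :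
    StrictMonoOn (fun z => varsigma z / z) (Set.Ioi (0 : ℝ)) ∧
    Filter.Tendsto (fun z => varsigma z / z) Filter.atTop (nhds 1) := by
  constructor
  · apply strictMonoOn_of_deriv_pos (convex_Ioi 0)
    · intro x hx
      exact (f_hasDerivAt hx).continuousAt.continuousWithinAt
    · intro x hx
      rw [interior_Ioi] at hx
      have hx' : (0:ℝ) < x := hx
      rw [(f_hasDerivAt hx').deriv]
      have := varsigma_lt hx'
      have hx2 : (0:ℝ) < x ^ 2 := by positivity
      exact div_pos (by linarith) hx2
  · have hinv : Tendsto (fun z : ℝ => z⁻¹) atTop (nhds 0) := tendsto_inv_atTop_zero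
    have hd : Tendsto (fun z : ℝ => z⁻¹ + Real.sqrt (z⁻¹ ^ 2 + 1)) atTop (nhds 1) := by
      have : Tendsto (fun z : ℝ => Real.sqrt (z⁻¹ ^ 2 + 1)) atTop (nhds 1) := by
        have h0 : Tendsto (fun z : ℝ => z⁻¹ ^ 2 + 1) atTop (nhds 1) := by
          simpa using ((hinv.pow 2).add tendsto_const_nhds)
        have := (Real.continuous_sqrt.tendsto 1).comp h0
        simpa [Function.comp_def] using this
      simpa using hinv.add this
    have h1 : Tendsto (fun z : ℝ => Real.sqrt (1 + z ^ 2) / z) atTop (nhds 1) := by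
      have : Tendsto (fun z : ℝ => Real.sqrt (z⁻¹ ^ 2 + 1)) atTop (nhds 1) := by
        have h0 : Tendsto (fun z : ℝ => z⁻¹ ^ 2 + 1) atTop (nhds 1) := by
          simpa using ((hinv.pow 2).add tendsto_const_nhds)
        have := (Real.continuous_sqrt.tendsto 1).comp h0
        simpa [Function.comp_def] using this
      apply this.congr'
      filter_upwards [eventually_gt_atTop (0:ℝ)] with z hz
      exact sqrt_aux hz
    have hr : Tendsto (fun z : ℝ => z / (1 + Real.sqrt (1 + z ^ 2))) atTop (nhds 1) := by
      have := (hd.inv₀ one_ne_zero)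
      rw [inv_one] at this
      apply this.congr'
      filter_upwards [eventually_gt_atTop (0:ℝ)] with z hz
      rw [sqrt_aux hz]
      have hs0 : 0 < Real.sqrt (1 + z ^ 2) := sqrt_pos' z
      rw [inv_eq_one_div]
      rw [div_eq_div_iff (by positivity) (by positivity)]
      field_simp
    have h2 : Tendsto (fun z : ℝ => Real.log (z / (1 + Real.sqrt (1 + z ^ 2))) / z)
        atTop (nhds 0) := by
      have hlog : Tendsto (fun z : ℝ => Real.log (z / (1 + Real.sqrt (1 + z ^ 2))))
          atTop (nhds 0) := by
        have := (Real.continuousAt_log one_ne_zero).tendsto.comp hr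
        simpa [Function.comp_def] using this
      have := hlog.mul hinv
      rw [mul_zero] at this
      apply this.congr
      intro z; simp [div_eq_mul_inv]
    have := h1.add h2
    rw [add_zero] at this
    apply this.congr
    intro z
    rw [varsigma, add_div]
end

section
/- For fixed μ > 0, the function g(z) = -1 + 2(ς(z)+μ)/z on (0,∞) attains its absolute maximum at z₀ = 1/sinh(μ) = 2/(e^μ - e^{-μ}), and the maximum value is g(z₀) = e^μ - 1 + e^{-μ}. -/
theorem g_max_at_csch (μ : ℝ) (hμ : 0 < μ)
    (g : ℝ → ℝ) (hg : ∀ z, g z = -1 + 2 * (varsigma z + μ) / z)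
    (z₀ : ℝ) (hz₀ : z₀ = 2 / (Real.exp μ - Real.exp (-μ))) :
    z₀ = 1 / Real.sinh μ ∧
    (∀ z : ℝ, 0 < z → g z ≤ g z₀) ∧
    g z₀ = Real.exp μ - 1 + Real.exp (-μ) := by
  set E := Real.exp μ with hE
  set F := Real.exp (-μ) with hF
  have hE0 : 0 < E := Real.exp_pos _
  have hF0 : 0 < F := Real.exp_pos _
  have hEF : E * F = 1 := by rw [hE, hF, ← Real.exp_add]; simp
  have hFE : F < E := Real.exp_lt_exp.mpr (by linarith)
  have hd : 0 < E - F := by linarith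
  clear_value E F
  have hz₀pos : 0 < z₀ := by rw [hz₀]; positivity
  -- sqrt at z₀
  have hsq₀ : Real.sqrt (1 + z₀ ^ 2) = (E + F) / (E - F) := by
    have h1 : 1 + z₀ ^ 2 = ((E + F) / (E - F)) ^ 2 := by
      rw [hz₀]; field_simp; nlinarith [hEF]
    rw [h1, Real.sqrt_sq (by positivity)]
  have hlogarg : z₀ / (1 + (E + F) / (E - F)) = F := by
    rw [hz₀]; field_simp; nlinarith [hEF]
  have hvs₀ : varsigma z₀ = (E + F) / (E - F) - μ := by
    rw [varsigma, hsq₀, hlogarg, hF, Real.log_exp]; ring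
  have hgz₀ : g z₀ = E - 1 + F := by
    rw [hg, hvs₀, hz₀]
    field_simp
    ring
  refine ⟨?_, ?_, hgz₀⟩
  · rw [hz₀, Real.sinh_eq, hE, hF]
    rw [one_div_div]
  · intro z hz
    rw [hg z, hgz₀]
    set s := Real.sqrt (1 + z ^ 2) with hs
    have hs0 : 0 < s := by rw [hs]; exact Real.sqrt_pos.mpr (by positivity)
    have hs2 : s ^ 2 = 1 + z ^ 2 := by rw [hs]; exact Real.sq_sqrt (by positivity)
    clear_value s
    have h1s : 0 < 1 + s := by linarith
    -- key inequality : (E+F)*s ≥ 2z + (E-F)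
    have hid : ((E + F) * s) ^ 2 = (2 * z + (E - F)) ^ 2 + (z * (E - F) - 2) ^ 2 := by
      linear_combination (E + F) ^ 2 * hs2 + 4 * (1 + z ^ 2) * hEF
    have hsqkey : (2 * z + (E - F)) ^ 2 ≤ ((E + F) * s) ^ 2 := by
      nlinarith [sq_nonneg (z * (E - F) - 2), hid]
    have ha0 : 0 < 2 * z + (E - F) := by linarith
    have hb0 : 0 < (E + F) * s := by positivity
    have hkey : 2 * z + (E - F) ≤ (E + F) * s := by
      nlinarith [hsqkey, ha0, hb0]
    -- log bound
    have hlog : Real.log (z / (1 + s)) ≤ z * E / (1 + s) - 1 - μ := by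
      have h2 : Real.log (z * E / (1 + s)) ≤ z * E / (1 + s) - 1 :=
        Real.log_le_sub_one_of_pos (by positivity)
      have h3 : Real.log (z * E / (1 + s)) = Real.log (z / (1 + s)) + μ := by
        rw [show z * E / (1 + s) = (z / (1 + s)) * E by ring,
          Real.log_mul (by positivity) hE0.ne', hE, Real.log_exp]
      linarith
    -- main bound : varsigma z + μ ≤ z * (E + F) / 2
    have hmain : varsigma z + μ ≤ z * (E + F) / 2 := by
      rw [varsigma, ← hs]
      have h4 : z * E / (1 + s) ≤ z * (E + F) / 2 - s + 1 := by
        rw [div_le_iff₀ h1s]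
        nlinarith [mul_le_mul_of_nonneg_left hkey hz.le, hs2]
      linarith
    have : 2 * (varsigma z + μ) / z ≤ E + F := by
      rw [div_le_iff₀ hz]
      linarith [hmain]
    linarith
end

section
/- The function c(μ) = (e^μ - 1 + e^{-μ})/μ on (0,∞) has a unique critical point μ*; it is strictly decreasing on (0, μ*] and strictly increasing on (μ*, ∞). -/
noncomputable def waveSpeed (μ : ℝ) : ℝ := (Real.exp μ - 1 + Real.exp (-μ)) / μ

noncomputable def waveG (μ : ℝ) : ℝ :=
  μ * (Real.exp μ - Real.exp (-μ)) - (Real.exp μ - 1 + Real.exp (-μ))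

lemma hasDerivAt_expNeg (μ : ℝ) : HasDerivAt (fun x => Real.exp (-x)) (-Real.exp (-μ)) μ := by
  have := (Real.hasDerivAt_exp (-μ)).comp μ (hasDerivAt_neg μ)
  exact this.congr_deriv (by ring)

lemma hasDerivAt_waveSpeed {μ : ℝ} (hμ : μ ≠ 0) :
    HasDerivAt waveSpeed (waveG μ / μ ^ 2) μ := by
  have hnum : HasDerivAt (fun x => Real.exp x - 1 + Real.exp (-x))
      (Real.exp μ - Real.exp (-μ)) μ := by
    have := ((Real.hasDerivAt_exp μ).sub_const 1).add (hasDerivAt_expNeg μ)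
    exact this.congr_deriv (by ring)
  have := hnum.div (hasDerivAt_id μ) hμ
  refine this.congr_deriv ?_
  simp only [id]
  unfold waveG
  field_simp

lemma deriv_waveSpeed {μ : ℝ} (hμ : μ ≠ 0) : deriv waveSpeed μ = waveG μ / μ ^ 2 :=
  (hasDerivAt_waveSpeed hμ).deriv

lemma hasDerivAt_waveG (μ : ℝ) :
    HasDerivAt waveG (μ * (Real.exp μ + Real.exp (-μ))) μ := by
  have h1 : HasDerivAt (fun x : ℝ => x * (Real.exp x - Real.exp (-x)))
      ((Real.exp μ - Real.exp (-μ)) + μ * (Real.exp μ + Real.exp (-μ))) μ := by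
    have := (hasDerivAt_id μ).mul ((Real.hasDerivAt_exp μ).sub (hasDerivAt_expNeg μ))
    refine this.congr_deriv ?_
    simp only [id, Pi.sub_apply]
    ring
  have h2 : HasDerivAt (fun x : ℝ => Real.exp x - 1 + Real.exp (-x))
      (Real.exp μ - Real.exp (-μ)) μ := by
    have := ((Real.hasDerivAt_exp μ).sub_const 1).add (hasDerivAt_expNeg μ)
    exact this.congr_deriv (by ring)
  have := h1.sub h2
  exact this.congr_deriv (by ring)

lemma waveG_strictMonoOn : StrictMonoOn waveG (Set.Ici 0) := by
  apply strictMonoOn_of_deriv_pos (convex_Ici 0)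
  · exact fun x _ => ((hasDerivAt_waveG x).continuousAt).continuousWithinAt
  · intro x hx
    rw [interior_Ici] at hx
    rw [(hasDerivAt_waveG x).deriv]
    exact mul_pos hx (by positivity)

lemma waveG_zero : waveG 0 = -1 := by simp [waveG]

lemma waveG_two_pos : 0 < waveG 2 := by
  unfold waveG
  have h1 : (3:ℝ) < Real.exp 2 := by
    have := Real.add_one_lt_exp (x := 2) (by norm_num)
    linarith
  have h2 : Real.exp (-2) < 1 := by
    rw [Real.exp_lt_one_iff]; norm_num
  nlinarith [Real.exp_pos (-2)]

theorem waveSpeed_unique_critical_point :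
    ∃ μs : ℝ, 0 < μs ∧ deriv waveSpeed μs = 0 ∧
      (∀ μ : ℝ, 0 < μ → deriv waveSpeed μ = 0 → μ = μs) ∧
      StrictAntiOn waveSpeed (Set.Ioc 0 μs) ∧
      StrictMonoOn waveSpeed (Set.Ioi μs) := by
  have hcont : ContinuousOn waveG (Set.Icc 0 2) :=
    fun x _ => ((hasDerivAt_waveG x).continuousAt).continuousWithinAt
  have h0 : (0:ℝ) ∈ Set.Ioo (waveG 0) (waveG 2) := by
    rw [waveG_zero]
    exact ⟨by norm_num, waveG_two_pos⟩
  obtain ⟨μs, hμs, hgs⟩ := intermediate_value_Ioo (by norm_num : (0:ℝ) ≤ 2) hcont h0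
  have hμs0 : 0 < μs := hμs.1
  -- g μ < 0 for 0 < μ < μs, g μ > 0 for μ > μs
  have hneg : ∀ μ : ℝ, 0 < μ → μ < μs → waveG μ < 0 := fun μ h1 h2 => by
    have := waveG_strictMonoOn (le_of_lt h1) (le_of_lt hμs0) h2
    linarith [hgs ▸ this]
  have hpos : ∀ μ : ℝ, μs < μ → 0 < waveG μ := fun μ h2 => by
    have := waveG_strictMonoOn (le_of_lt hμs0) (le_of_lt (hμs0.trans h2)) h2
    linarith [hgs ▸ this]
  refine ⟨μs, hμs0, ?_, ?_, ?_, ?_⟩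
  · rw [deriv_waveSpeed hμs0.ne', hgs]; simp
  · intro μ hμ hd
    rw [deriv_waveSpeed hμ.ne'] at hd
    have hg : waveG μ = 0 := by
      have : μ ^ 2 ≠ 0 := pow_ne_zero _ hμ.ne'
      field_simp at hd
      simpa using hd
    exact waveG_strictMonoOn.injOn (le_of_lt hμ) (le_of_lt hμs0) (hg.trans hgs.symm)
  · apply strictAntiOn_of_deriv_neg (convex_Ioc 0 μs)
    · intro x hx
      exact ((hasDerivAt_waveSpeed (ne_of_gt hx.1)).continuousAt).continuousWithinAt
    · intro x hx
      rw [interior_Ioc] at hx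
      rw [deriv_waveSpeed hx.1.ne']
      have := hneg x hx.1 hx.2
      have hx2 : 0 < x ^ 2 := pow_pos hx.1 2
      exact div_neg_of_neg_of_pos this hx2
  · apply strictMonoOn_of_deriv_pos (convex_Ioi μs)
    · intro x hx
      have hx0 : 0 < x := hμs0.trans hx
      exact ((hasDerivAt_waveSpeed hx0.ne').continuousAt).continuousWithinAt
    · intro x hx
      rw [interior_Ioi] at hx
      have hx0 : 0 < x := hμs0.trans hx
      rw [deriv_waveSpeed hx0.ne']
      exact div_pos (hpos x hx) (pow_pos hx0 2)
end

section
/- Poincaré inequality on the integer line: Let r be a positive integer, x₀ ∈ ℤ, and v : ℤ → ℝ. Let B = {x ∈ ℤ : |x - x₀| ≤ r} and v̄ = (1/(2r+1)) ∑_{x ∈ B} v(x). Then ∑_{x ∈ B} 2(v(x) - v̄)² ≤ 12 r² ∑_{x, x+1 ∈ B} 2(v(x+1) - v(x))², where the right-hand sum counts each edge of B in both directions (i.e., equals 2 ∑_{x=x₀-r}^{x₀+r-1} 2(v(x+1)-v(x))²). -/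
open Finset

lemma int_sum_shift (g : ℤ → ℝ) (a : ℤ) (n : ℕ) :
    ∑ z ∈ Finset.Ico a (a + n), g z = ∑ i ∈ Finset.range n, g (a + i) := by
  induction n with
  | zero => simp
  | succ n ih =>
      have h1 : (a + (n + 1 : ℕ)) = (a + n) + 1 := by push_cast; ring
      have h2 : Finset.Ico a ((a + n) + 1) = insert (a + (n : ℤ)) (Finset.Ico a (a + n)) := by
        ext z
        simp only [Finset.mem_Ico, Finset.mem_insert]
        omega
      rw [h1, h2, Finset.sum_insert (by simp), ih, Finset.sum_range_succ]
      push_cast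
      ring

lemma telescope (v : ℤ → ℝ) (a : ℤ) (n : ℕ) :
    v (a + n) - v a = ∑ i ∈ Finset.range n, (v (a + i + 1) - v (a + i)) := by
  have h := Finset.sum_range_sub (fun i : ℕ => v (a + i)) n
  have h2 : ∑ i ∈ Finset.range n, (v (a + i + 1) - v (a + i)) =
      ∑ i ∈ Finset.range n, (v (a + ↑(i + 1)) - v (a + ↑i)) :=
    Finset.sum_congr rfl (fun i _ => by norm_num [add_assoc])
  rw [h2, h]
  simp

lemma pair_bound (r : ℕ) (x₀ : ℤ) (v : ℤ → ℝ) (a b : ℤ)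
    (ha : a ∈ Finset.Icc (x₀ - r) (x₀ + r)) (hb : b ∈ Finset.Icc (x₀ - r) (x₀ + r))
    (hab : a ≤ b) :
    (v b - v a) ^ 2 ≤ 2 * r * ∑ z ∈ Finset.Icc (x₀ - r) (x₀ + r - 1), (v (z + 1) - v z) ^ 2 := by
  simp only [Finset.mem_Icc] at ha hb
  set n : ℕ := (b - a).toNat with hn
  have hbn : b = a + n := by omega
  have hnle : (n : ℝ) ≤ 2 * r := by
    have : (n : ℤ) ≤ 2 * r := by omega
    exact_mod_cast this
  have ht : v b - v a = ∑ i ∈ Finset.range n, (v (a + i + 1) - v (a + i)) := by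
    rw [hbn]; exact telescope v a n
  have hcs : (v b - v a) ^ 2 ≤ n * ∑ i ∈ Finset.range n, (v (a + i + 1) - v (a + i)) ^ 2 := by
    rw [ht]
    have := sq_sum_le_card_mul_sum_sq (s := Finset.range n)
      (f := fun i => v (a + i + 1) - v (a + i))
    simpa using this
  have hsub : ∑ i ∈ Finset.range n, (v (a + i + 1) - v (a + i)) ^ 2 ≤
      ∑ z ∈ Finset.Icc (x₀ - r) (x₀ + r - 1), (v (z + 1) - v z) ^ 2 := by
    rw [← int_sum_shift (fun z => (v (z + 1) - v z) ^ 2) a n]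
    apply Finset.sum_le_sum_of_subset_of_nonneg
    · intro z hz
      simp only [Finset.mem_Ico, Finset.mem_Icc] at hz ⊢
      omega
    · intro z _ _; positivity
  calc (v b - v a) ^ 2 ≤ n * ∑ i ∈ Finset.range n, (v (a + i + 1) - v (a + i)) ^ 2 := hcs
    _ ≤ 2 * r * ∑ z ∈ Finset.Icc (x₀ - r) (x₀ + r - 1), (v (z + 1) - v z) ^ 2 := by
        apply mul_le_mul hnle hsub (Finset.sum_nonneg fun i _ => by positivity) (by positivity)

theorem poincare_inequality_on_Z (r : ℕ) (hr : 0 < r) (x₀ : ℤ) (v : ℤ → ℝ)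
    (vbar : ℝ)
    (hvbar : vbar = (∑ x ∈ Finset.Icc (x₀ - r) (x₀ + r), v x) / (2 * r + 1)) :
    ∑ x ∈ Finset.Icc (x₀ - r) (x₀ + r), 2 * (v x - vbar) ^ 2 ≤
      12 * (r : ℝ) ^ 2 *
        (2 * ∑ x ∈ Finset.Icc (x₀ - r) (x₀ + r - 1), 2 * (v (x + 1) - v x) ^ 2) := by
  set B := Finset.Icc (x₀ - r) (x₀ + r) with hB
  set S := ∑ z ∈ Finset.Icc (x₀ - r) (x₀ + r - 1), (v (z + 1) - v z) ^ 2 with hS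
  have hSnn : 0 ≤ S := Finset.sum_nonneg fun i _ => by positivity
  have hcard : (B.card : ℝ) = 2 * r + 1 := by
    rw [hB, Int.card_Icc]
    have : (x₀ + r + 1 - (x₀ - r)).toNat = 2 * r + 1 := by omega
    rw [this]; push_cast; ring
  have hn : (0:ℝ) < 2 * r + 1 := by positivity
  -- pointwise bound
  have key : ∀ x ∈ B, (v x - vbar) ^ 2 ≤ 2 * r * S := by
    intro x hx
    have hx1 : v x - vbar = (∑ y ∈ B, (v x - v y)) / (2 * r + 1) := by
      rw [hvbar, Finset.sum_sub_distrib, Finset.sum_const, nsmul_eq_mul, hcard]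
      field_simp
    have hcs : (∑ y ∈ B, (v x - v y)) ^ 2 ≤ (2 * r + 1) * ∑ y ∈ B, (v x - v y) ^ 2 := by
      have := sq_sum_le_card_mul_sum_sq (s := B) (f := fun y => v x - v y)
      rw [← hcard]
      simpa using this
    have hterm : ∀ y ∈ B, (v x - v y) ^ 2 ≤ 2 * r * S := by
      intro y hy
      rcases le_total y x with h | h
      · exact pair_bound r x₀ v y x hy hx h
      · have := pair_bound r x₀ v x y hx hy h
        rw [show (v x - v y) ^ 2 = (v y - v x) ^ 2 by ring]
        exact this
    have hsum : ∑ y ∈ B, (v x - v y) ^ 2 ≤ (2 * r + 1) * (2 * r * S) := by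
      calc ∑ y ∈ B, (v x - v y) ^ 2 ≤ ∑ _y ∈ B, 2 * r * S := Finset.sum_le_sum hterm
        _ = (2 * r + 1) * (2 * r * S) := by rw [Finset.sum_const, ← hcard]; simp [mul_comm]
    rw [hx1, div_pow]
    rw [div_le_iff₀ (by positivity)]
    calc (∑ y ∈ B, (v x - v y)) ^ 2 ≤ (2 * r + 1) * ((2 * r + 1) * (2 * r * S)) :=
          le_trans hcs (by nlinarith)
      _ = 2 * r * S * (2 * r + 1) ^ 2 := by ring
  have lhs_bound : ∑ x ∈ B, 2 * (v x - vbar) ^ 2 ≤ (2 * r + 1) * (2 * (2 * r * S)) := by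
    calc ∑ x ∈ B, 2 * (v x - vbar) ^ 2 ≤ ∑ _x ∈ B, 2 * (2 * r * S) :=
          Finset.sum_le_sum fun x hx => by linarith [key x hx]
      _ = (2 * r + 1) * (2 * (2 * r * S)) := by rw [Finset.sum_const, ← hcard]; simp [mul_comm]
  have hrhs : 12 * (r : ℝ) ^ 2 * (2 * ∑ x ∈ Finset.Icc (x₀ - r) (x₀ + r - 1),
      2 * (v (x + 1) - v x) ^ 2) = 48 * r ^ 2 * S := by
    rw [hS, Finset.mul_sum]
    rw [Finset.mul_sum, Finset.mul_sum]
    apply Finset.sum_congr rfl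
    intro z _; ring
  rw [hrhs]
  have hr1 : (1:ℝ) ≤ r := by exact_mod_cast hr
  have h2 : 0 ≤ (r:ℝ) * S * ((r:ℝ) - 1) :=
    mul_nonneg (mul_nonneg (by positivity) hSnn) (by linarith)
  have h3 : 0 ≤ (r:ℝ) * (r:ℝ) * S := mul_nonneg (by positivity) hSnn
  nlinarith [lhs_bound, h2, h3]
end

section
/- Intermediate oscillation point: Let r be a positive integer, v : {-r,...,r} → ℝ, and v̄ = (1/(2r+1)) ∑_{x=-r}^{r} v(x). Then there exists an integer x̂ with -r ≤ x̂ < r such that max{|v(x̂+1) - v̄|, |v(x̂) - v̄|} ≤ |v(x̂) - v(x̂+1)|. -/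
theorem oscillation_point (r : ℕ) (hr : 0 < r) (v : ℤ → ℝ) (vbar : ℝ)
    (hvbar : vbar = (∑ x ∈ Finset.Icc (-(r : ℤ)) r, v x) / (2 * r + 1)) :
    ∃ xhat : ℤ, -(r : ℤ) ≤ xhat ∧ xhat < r ∧
      max |v (xhat + 1) - vbar| |v xhat - vbar| ≤ |v xhat - v (xhat + 1)| := by
  by_contra h
  push_neg at h
  -- each consecutive pair lies strictly on the same side of vbar
  have key : ∀ x : ℤ, -(r : ℤ) ≤ x → x < r →
      0 < (v x - vbar) * (v (x + 1) - vbar) := by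
    intro x hx1 hx2
    by_contra hle
    push_neg at hle
    have hlt := h x hx1 hx2
    have hmax : max |v (x + 1) - vbar| |v x - vbar| ≤ |v x - v (x + 1)| := by
      rcases mul_nonpos_iff.mp hle with ⟨ha, hb⟩ | ⟨ha, hb⟩
      · rw [abs_of_nonneg (by linarith : (0:ℝ) ≤ v x - v (x + 1)),
          abs_of_nonpos hb, abs_of_nonneg ha, max_le_iff]
        constructor <;> linarith
      · rw [abs_of_nonpos (by linarith : v x - v (x + 1) ≤ 0),
          abs_of_nonneg hb, abs_of_nonpos ha, max_le_iff]
        constructor <;> linarith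
    exact absurd hlt hmax.not_gt
  have hcard : (Finset.Icc (-(r : ℤ)) r).card = 2 * r + 1 := by
    rw [Int.card_Icc]
    omega
  have hsum : ∑ x ∈ Finset.Icc (-(r : ℤ)) r, (v x - vbar) = 0 := by
    rw [Finset.sum_sub_distrib, Finset.sum_const, hcard, hvbar]
    have : (2 * (r : ℝ) + 1) ≠ 0 := by positivity
    rw [nsmul_eq_mul]; push_cast
    field_simp
    ring
  have hne : (Finset.Icc (-(r : ℤ)) r).Nonempty := by
    refine ⟨0, Finset.mem_Icc.mpr ⟨by simp, by exact_mod_cast r.cast_nonneg⟩⟩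
  have hr' : -(r : ℤ) < r := by omega
  have h0 := key (-(r : ℤ)) le_rfl hr'
  rcases lt_or_gt_of_ne (fun hz : v (-(r : ℤ)) - vbar = 0 => by simp [hz] at h0)
    with hneg | hpos
  · -- all values below vbar
    have all : ∀ x : ℤ, -(r : ℤ) ≤ x → x ≤ r → v x - vbar < 0 := by
      intro x hx
      refine Int.le_induction (motive := fun n _ => n ≤ (r : ℤ) → v n - vbar < 0)
        ?_ ?_ x hx
      · intro _; exact hneg
      · intro n hn ih hn1
        have hprev := ih (by omega)
        have hk := key n hn (by omega)
        nlinarith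
    have : ∑ x ∈ Finset.Icc (-(r : ℤ)) r, (v x - vbar) < 0 := by
      apply Finset.sum_neg ?_ hne
      intro x hx
      rw [Finset.mem_Icc] at hx
      exact all x hx.1 hx.2
    linarith
  · have all : ∀ x : ℤ, -(r : ℤ) ≤ x → x ≤ r → 0 < v x - vbar := by
      intro x hx
      refine Int.le_induction (motive := fun n _ => n ≤ (r : ℤ) → 0 < v n - vbar)
        ?_ ?_ x hx
      · intro _; exact hpos
      · intro n hn ih hn1
        have hprev := ih (by omega)
        have hk := key n hn (by omega)
        nlinarith
    have : 0 < ∑ x ∈ Finset.Icc (-(r : ℤ)) r, (v x - vbar) := by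
      apply Finset.sum_pos ?_ hne
      intro x hx
      rw [Finset.mem_Icc] at hx
      exact all x hx.1 hx.2
    linarith
end

section
/- The minimal wave speed c* = inf_{μ>0} (e^μ + e^{-μ} - 1)/μ is attained at the unique μ* > 0 solving μ(e^μ - e^{-μ}) = e^μ + e^{-μ} - 1, and c* = e^{μ*} - e^{-μ*} = 2 sinh(μ*) > 2. -/
private noncomputable def gfun (μ : ℝ) : ℝ :=
  μ * (Real.exp μ - Real.exp (-μ)) - (Real.exp μ + Real.exp (-μ) - 1)

private lemma exp_neg_hasDerivAt (x : ℝ) :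
    HasDerivAt (fun y : ℝ => Real.exp (-y)) (-Real.exp (-x)) x := by
  simpa using (hasDerivAt_neg x).exp

private lemma gfun_hasDerivAt (x : ℝ) :
    HasDerivAt gfun (x * (Real.exp x + Real.exp (-x))) x := by
  have h1 := Real.hasDerivAt_exp x
  have h2 := exp_neg_hasDerivAt x
  have h := ((hasDerivAt_id x).mul (h1.sub h2)).sub ((h1.add h2).sub_const 1)
  refine HasDerivAt.congr_deriv h ?_
  simp only [id_eq, Pi.sub_apply]
  ring

private lemma gfun_cont : Continuous gfun := by
  unfold gfun; fun_prop

private lemma gfun_strictMonoOn : StrictMonoOn gfun (Set.Ici 0) := by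
  apply strictMonoOn_of_deriv_pos (convex_Ici 0) gfun_cont.continuousOn
  intro x hx
  rw [interior_Ici] at hx
  rw [(gfun_hasDerivAt x).deriv]
  have := Real.exp_pos x
  have := Real.exp_pos (-x)
  have : (0:ℝ) < x := hx
  positivity

private lemma exp09_bounds : (2.4578 : ℝ) ≤ Real.exp 0.9 ∧ Real.exp 0.9 ≤ 2.4597 := by
  have h := Real.exp_bound (x := 0.9) (by rw [abs_of_nonneg] <;> norm_num) (n := 6) (by norm_num)
  rw [abs_of_nonneg (by norm_num : (0.9:ℝ) ≥ 0)] at h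
  simp only [Finset.sum_range_succ] at h
  norm_num [Nat.factorial] at h
  rw [abs_le] at h
  constructor <;> nlinarith [h.1, h.2]

theorem minimal_wave_speed_attained :
    ∃ μs : ℝ, 0 < μs ∧
      μs * (Real.exp μs - Real.exp (-μs)) = Real.exp μs + Real.exp (-μs) - 1 ∧
      (∀ μ : ℝ, 0 < μ →
        μ * (Real.exp μ - Real.exp (-μ)) = Real.exp μ + Real.exp (-μ) - 1 → μ = μs) ∧
      (∀ μ : ℝ, 0 < μ → waveSpeed μs ≤ waveSpeed μ) ∧
      waveSpeed μs = 2 * Real.sinh μs ∧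
      2 < waveSpeed μs := by
  -- g(0) = -1
  have hg0 : gfun 0 = -1 := by simp [gfun]
  -- g(2) > 0
  have hg2 : 0 < gfun 2 := by
    have h1 : (3:ℝ) ≤ Real.exp 2 := by nlinarith [Real.add_one_le_exp (2:ℝ)]
    have h2 : Real.exp (-2) ≤ 1 := Real.exp_le_one_iff.2 (by norm_num)
    have h3 := Real.exp_pos (-2:ℝ)
    unfold gfun
    nlinarith
  -- IVT gives a zero
  obtain ⟨μs, hmem, hzero⟩ : ∃ μs ∈ Set.Icc (0:ℝ) 2, gfun μs = 0 := by
    have := intermediate_value_Icc (by norm_num : (0:ℝ) ≤ 2) gfun_cont.continuousOn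
    have h0 : (0:ℝ) ∈ Set.Icc (gfun 0) (gfun 2) := by
      rw [hg0]; exact ⟨by norm_num, le_of_lt hg2⟩
    obtain ⟨μs, hμs, h⟩ := this h0
    exact ⟨μs, hμs, h⟩
  have hμs_pos : 0 < μs := by
    rcases hmem.1.lt_or_eq with h | h
    · exact h
    · exfalso; rw [← h] at hzero; rw [hg0] at hzero; norm_num at hzero
  have hμs_mem : μs ∈ Set.Ici (0:ℝ) := le_of_lt hμs_pos
  have heq : μs * (Real.exp μs - Real.exp (-μs)) = Real.exp μs + Real.exp (-μs) - 1 := by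
    have := hzero; unfold gfun at this; linarith
  -- μs > 0.9
  have hμs_gt : (0.9:ℝ) < μs := by
    have hg09 : gfun 0.9 < 0 := by
      obtain ⟨hl, hu⟩ := exp09_bounds
      have hpos := Real.exp_pos (0.9:ℝ)
      have hinv : Real.exp (-(0.9:ℝ)) = (Real.exp 0.9)⁻¹ := by
        rw [Real.exp_neg]
      unfold gfun
      rw [hinv, inv_eq_one_div]
      have hge : (1/2.4597:ℝ) ≤ 1/Real.exp 0.9 := one_div_le_one_div_of_le hpos hu
      linarith
    by_contra hcon
    push_neg at hcon
    have := gfun_strictMonoOn.monotoneOn hμs_mem (by norm_num : (0.9:ℝ) ∈ Set.Ici (0:ℝ)) hcon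
    rw [hzero] at this
    linarith
  -- sinh μs > 1
  have hsinh09 : 1 < Real.sinh 0.9 := by
    obtain ⟨hl, hu⟩ := exp09_bounds
    have hpos := Real.exp_pos (0.9:ℝ)
    rw [Real.sinh_eq, Real.exp_neg, inv_eq_one_div]
    rw [lt_div_iff₀ (by norm_num : (0:ℝ) < 2)]
    have hle : 1/Real.exp 0.9 ≤ 1/2.4578 := one_div_le_one_div_of_le (by norm_num) hl
    linarith
  have hsinh : 1 < Real.sinh μs := lt_trans hsinh09 (Real.sinh_lt_sinh.2 hμs_gt)
  -- waveSpeed μs = 2 sinh μs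
  have hws : waveSpeed μs = 2 * Real.sinh μs := by
    unfold waveSpeed
    rw [Real.sinh_eq]
    rw [div_eq_iff (ne_of_gt hμs_pos)]
    nlinarith [heq]
  refine ⟨μs, hμs_pos, heq, ?_, ?_, hws, by rw [hws]; linarith⟩
  · -- uniqueness
    intro μ hμ hμeq
    have hzμ : gfun μ = 0 := by unfold gfun; linarith
    exact gfun_strictMonoOn.injOn (le_of_lt hμ) hμs_mem (by rw [hzμ, hzero])
  · -- minimality
    intro μ hμ
    set c := 2 * Real.sinh μs with hc
    set h : ℝ → ℝ := fun y => Real.exp y - 1 + Real.exp (-y) - y * c with hh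
    have hderiv : ∀ x, HasDerivAt h (2 * Real.sinh x - c) x := by
      intro x
      have h1 := Real.hasDerivAt_exp x
      have h2 := exp_neg_hasDerivAt x
      have := ((h1.sub_const 1).add h2).sub ((hasDerivAt_id x).mul_const c)
      refine HasDerivAt.congr_deriv this ?_
      rw [Real.sinh_eq]; ring
    have hcont : Continuous h := by rw [hh]; fun_prop
    have hμs0 : h μs = 0 := by
      rw [hh]; simp only
      rw [hc, Real.sinh_eq]
      nlinarith [heq]
    have hnonneg : 0 ≤ h μ := by
      rcases lt_trichotomy μ μs with hlt | heq' | hgt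
      · have hanti : StrictAntiOn h (Set.Iic μs) := by
          apply strictAntiOn_of_deriv_neg (convex_Iic μs) hcont.continuousOn
          intro x hx
          rw [interior_Iic] at hx
          rw [(hderiv x).deriv, hc]
          have := Real.sinh_lt_sinh.2 hx
          linarith
        have := hanti (le_of_lt hlt) (le_refl μs : μs ∈ Set.Iic μs) hlt
        rw [hμs0] at this; linarith
      · rw [heq', hμs0]
      · have hmono : StrictMonoOn h (Set.Ici μs) := by
          apply strictMonoOn_of_deriv_pos (convex_Ici μs) hcont.continuousOn
          intro x hx
          rw [interior_Ici] at hx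
          rw [(hderiv x).deriv, hc]
          have := Real.sinh_lt_sinh.2 hx
          linarith
        have := hmono (le_refl μs : μs ∈ Set.Ici μs) (le_of_lt hgt) hgt
        rw [hμs0] at this; linarith
    rw [hws, waveSpeed, le_div_iff₀ hμ]
    rw [hh] at hnonneg; simp only at hnonneg
    linarith
end

section
/- Positivity condition for the perturbed eigenvector: With ψ_j = 1 + (1-a₀)e^{-μ}(1 - e^{2μj})/(1 - e^{-2μ}) for j < 0 and ψ_j = 1 for j ≥ 0, if a₀ ≤ e^μ - e^{-μ} + 1 then ψ_j > 0 for all j ∈ ℤ. Equivalently, ψ_j > 0 for all j iff μ ≥ ln((-(1-a₀) + √((1-a₀)² + 4))/2) when a₀ > 1, and always when a₀ ≤ 1. -/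
theorem perturbed_eigenvector_positivity (μ a₀ : ℝ) (hμ : 0 < μ)
    (ψ : ℤ → ℝ) (hψ1 : ∀ j : ℤ, 0 ≤ j → ψ j = 1)
    (hψ2 : ∀ j : ℤ, j < 0 →
      ψ j = 1 + (1 - a₀) * Real.exp (-μ) * (1 - Real.exp (2 * μ * j)) / (1 - Real.exp (-2 * μ))) :
    (a₀ ≤ Real.exp μ - Real.exp (-μ) + 1 → ∀ j : ℤ, 0 < ψ j) ∧
    (a₀ ≤ 1 → ∀ j : ℤ, 0 < ψ j) ∧
    (1 < a₀ →
      ((∀ j : ℤ, 0 < ψ j) ↔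
        Real.log ((-(1 - a₀) + Real.sqrt ((1 - a₀) ^ 2 + 4)) / 2) ≤ μ)) := by
  have hx0 : 0 < Real.exp μ := Real.exp_pos μ
  have hx1 : 1 < Real.exp μ := by
    rw [show (1:ℝ) = Real.exp 0 by simp]
    exact Real.exp_lt_exp.mpr hμ
  have hemp : 0 < Real.exp (-μ) := Real.exp_pos _
  have hem : Real.exp (-μ) < 1 := Real.exp_lt_one_iff.mpr (by linarith)
  have hD : 0 < Real.exp μ - Real.exp (-μ) := by linarith
  set D := Real.exp μ - Real.exp (-μ) with hDdef
  have hprod : Real.exp (-μ) * Real.exp μ = 1 := by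
    rw [← Real.exp_add]; simp
  have hden : (1 : ℝ) - Real.exp (-2*μ) = Real.exp (-μ) * D := by
    have h2 : Real.exp (-2*μ) = Real.exp (-μ) * Real.exp (-μ) := by
      rw [← Real.exp_add]; ring_nf
    rw [h2, hDdef]; nlinarith
  have hrw : ∀ j : ℤ, j < 0 → ψ j = 1 + (1 - a₀) * (1 - Real.exp (2*μ*j)) / D := by
    intro j hj
    rw [hψ2 j hj, hden]
    have hne : Real.exp (-μ) ≠ 0 := ne_of_gt hemp
    have hne2 : D ≠ 0 := ne_of_gt hD
    field_simp
  have hE : ∀ j : ℤ, j < 0 → 0 < Real.exp (2*μ*j) ∧ Real.exp (2*μ*j) < 1 := by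
    intro j hj
    refine ⟨Real.exp_pos _, Real.exp_lt_one_iff.mpr ?_⟩
    have hjr : (j:ℝ) < 0 := by exact_mod_cast hj
    nlinarith
  have key : a₀ - 1 ≤ D → ∀ j : ℤ, 0 < ψ j := by
    intro h j
    rcases le_or_gt 0 j with hj | hj
    · rw [hψ1 j hj]; norm_num
    · rw [hrw j hj]
      obtain ⟨hE0, hE1⟩ := hE j hj
      rcases le_or_gt a₀ 1 with ha | ha
      · have h0 : 0 ≤ (1 - a₀) * (1 - Real.exp (2*μ*j)) / D :=
          div_nonneg (mul_nonneg (by linarith) (by linarith)) hD.le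
        linarith
      · have h1 : (a₀ - 1) * (1 - Real.exp (2*μ*j)) < D := by nlinarith
        have h2 : (a₀ - 1) * (1 - Real.exp (2*μ*j)) / D < 1 := (div_lt_one hD).mpr h1
        have h3 : (1 - a₀) * (1 - Real.exp (2*μ*j)) / D
            = -((a₀ - 1) * (1 - Real.exp (2*μ*j)) / D) := by ring
        rw [h3]; linarith
  have rev : 1 < a₀ → (∀ j : ℤ, 0 < ψ j) → a₀ - 1 ≤ D := by
    intro ha hpos
    by_contra hc
    push_neg at hc
    set t := a₀ - 1 with htdef
    have ht : 0 < t := by linarith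
    have hε : 0 < 1 - D / t := by
      rw [sub_pos, div_lt_one ht]; exact hc
    have hr1 : Real.exp (-(2*μ)) < 1 := Real.exp_lt_one_iff.mpr (by linarith)
    have hr0 : 0 ≤ Real.exp (-(2*μ)) := (Real.exp_pos _).le
    obtain ⟨n, hn⟩ := exists_pow_lt_of_lt_one hε hr1
    set j : ℤ := -(n+1 : ℕ) with hjdef
    have hj : j < 0 := by simp [hjdef]; omega
    have hEn : Real.exp (2*μ*j) < 1 - D/t := by
      have heq : Real.exp (2*μ*j) = Real.exp (-(2*μ)) ^ (n+1) := by
        rw [← Real.exp_nat_mul]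
        congr 1
        push_cast [hjdef]
        ring
      rw [heq]
      calc Real.exp (-(2*μ)) ^ (n+1)
          ≤ Real.exp (-(2*μ)) ^ n := pow_le_pow_of_le_one hr0 hr1.le (by omega)
        _ < 1 - D/t := hn
    have hψj := hpos j
    rw [hrw j hj] at hψj
    have hlt : t * (1 - Real.exp (2*μ*j)) / D < 1 := by
      have h3 : (1 - a₀) * (1 - Real.exp (2*μ*j)) / D
          = -(t * (1 - Real.exp (2*μ*j)) / D) := by rw [htdef]; ring
      rw [h3] at hψj; linarith
    have hlt2 : t * (1 - Real.exp (2*μ*j)) < D := (div_lt_one hD).mp hlt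
    have hDt : D / t < 1 - Real.exp (2*μ*j) := by linarith
    have : D < t * (1 - Real.exp (2*μ*j)) := by
      have := (div_lt_iff₀ ht).mp hDt
      linarith [this]
    linarith
  have heqv : 1 < a₀ →
      (a₀ - 1 ≤ D ↔ Real.log ((-(1 - a₀) + Real.sqrt ((1 - a₀) ^ 2 + 4)) / 2) ≤ μ) := by
    intro ha
    set t := a₀ - 1 with htdef
    have ht : 0 < t := by linarith
    have h14 : (1 - a₀) ^ 2 + 4 = t ^ 2 + 4 := by rw [htdef]; ring
    have h1a : -(1 - a₀) = t := by rw [htdef]; ring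
    rw [h14, h1a]
    set s := Real.sqrt (t ^ 2 + 4) with hsdef
    have hs0 : 0 ≤ s := Real.sqrt_nonneg _
    have hs2 : s ^ 2 = t ^ 2 + 4 := Real.sq_sqrt (by positivity)
    have hs_ge : 2 ≤ s := by nlinarith
    have harg : 0 < (t + s) / 2 := by linarith
    rw [Real.log_le_iff_le_exp harg]
    set x := Real.exp μ with hxdef
    have hinv : Real.exp (-μ) = x⁻¹ := Real.exp_neg μ
    have hxinv : x * x⁻¹ = 1 := mul_inv_cancel₀ (ne_of_gt hx0)
    rw [hDdef, hinv]
    constructor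
    · intro h
      nlinarith [mul_le_mul_of_nonneg_right h hx0.le, sq_nonneg (2*x - t - s),
        sq_nonneg (2*x - t + s), inv_pos.mpr hx0]
    · intro h
      have h2 : 0 ≤ 2*x - t - s := by linarith
      have h3 : 0 < 2*x - t + s := by linarith
      have h4 : 0 ≤ (2*x - t - s) * (2*x - t + s) := mul_nonneg h2 h3.le
      rw [← sub_nonneg]
      have hx' : x ≠ 0 := ne_of_gt hx0
      have : x - x⁻¹ - t = (x * x - 1 - t * x) / x := by
        field_simp
      rw [this]
      apply div_nonneg _ hx0.le
      nlinarith
  refine ⟨fun h => key (by linarith), fun h => key (by linarith), fun ha => ?_⟩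
  constructor
  · intro hpos
    exact (heqv ha).mp (rev ha hpos)
  · intro hlog
    exact key ((heqv ha).mpr hlog)
end
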